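/- The random variable ν with P(ν = 1) = P(ν = -1) = (1-γ)/2 and P(ν = 0) = γ, γ ∈ [0,1], is strictly subgaussian if and only if 0 ≤ γ ≤ 2/3 or γ = 1. -/

import Mathlib

open MeasureTheory Real

private lemma exp_tsum (x : ℝ) : Real.exp x = ∑' n : ℕ, x ^ n / n.factorial := by
  rw [Real.exp_eq_exp_ℝ, NormedSpace.exp_eq_tsum_div]

private lemma summable_cosh_series (x : ℝ) :
    Summable (fun k : ℕ => x ^ (2 * k) / (2 * k).factorial) := by
  apply Summable.of_nonneg_of_le (fun k => by rw [pow_mul]; positivity)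
    (fun k => ?_) (Real.summable_pow_div_factorial (x ^ 2))
  rw [pow_mul]
  apply div_le_div_of_nonneg_left (by positivity) (by positivity)
  exact_mod_cast Nat.factorial_le (by omega)

private lemma cosh_tsum (x : ℝ) :
    Real.cosh x = ∑' k : ℕ, x ^ (2 * k) / (2 * k).factorial := by
  have hs : ∀ y : ℝ, Summable (fun n : ℕ => y ^ n / n.factorial) :=
    Real.summable_pow_div_factorial
  have heq_even : (fun k : ℕ => (x ^ (2*k) + (-x) ^ (2*k)) / (2 * ((2*k).factorial : ℝ)))
      = fun k : ℕ => x ^ (2*k) / ((2*k).factorial : ℝ) := by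
    funext k
    have h : (-x) ^ (2*k) = x ^ (2*k) := by rw [pow_mul, pow_mul, neg_sq]
    have hf : (0:ℝ) < ((2*k).factorial : ℝ) := by positivity
    field_simp [h]
    rw [h]; ring
  have heq_odd : (fun k : ℕ => (x ^ (2*k+1) + (-x) ^ (2*k+1)) / (2 * ((2*k+1).factorial : ℝ)))
      = fun _ : ℕ => (0:ℝ) := by
    funext k
    have h : (-x) ^ (2*k+1) = -(x ^ (2*k+1)) := by
      rw [pow_succ, pow_succ, pow_mul, pow_mul, neg_sq]; ring
    rw [h]; ring
  have hEv : Summable (fun k : ℕ => (x ^ (2*k) + (-x) ^ (2*k)) / (2 * ((2*k).factorial : ℝ))) := by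
    rw [heq_even]; exact summable_cosh_series x
  have hOd : Summable (fun k : ℕ => (x ^ (2*k+1) + (-x) ^ (2*k+1)) / (2 * ((2*k+1).factorial : ℝ))) := by
    rw [heq_odd]; exact summable_zero
  have key := tsum_even_add_odd
    (f := fun n : ℕ => (x ^ n + (-x) ^ n) / (2 * (n.factorial : ℝ))) hEv hOd
  calc Real.cosh x = (Real.exp x + Real.exp (-x)) / 2 := Real.cosh_eq x
    _ = ((∑' n : ℕ, x ^ n / n.factorial) + ∑' n : ℕ, (-x) ^ n / n.factorial) / 2 := by
        rw [exp_tsum, exp_tsum]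
    _ = ∑' n : ℕ, (x ^ n + (-x) ^ n) / (2 * (n.factorial : ℝ)) := by
        rw [← Summable.tsum_add (hs x) (hs (-x)), ← tsum_div_const]
        exact tsum_congr fun n => by ring
    _ = (∑' k : ℕ, (x ^ (2*k) + (-x) ^ (2*k)) / (2 * ((2*k).factorial : ℝ)))
        + ∑' k : ℕ, (x ^ (2*k+1) + (-x) ^ (2*k+1)) / (2 * ((2*k+1).factorial : ℝ)) := key.symm
    _ = ∑' k : ℕ, x ^ (2 * k) / (2 * k).factorial := by
        rw [heq_even, heq_odd, tsum_zero, add_zero]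

private lemma nat_fact_bound : ∀ k : ℕ, 3 ^ k * 2 ^ (k+1) * (k+1).factorial ≤ (2*(k+1)).factorial := by
  intro k
  induction k with
  | zero => simp [Nat.factorial]
  | succ n ih =>
    have h1 : 2*(n+2) = (2*(n+1)) + 2 := by ring
    rw [h1]
    have h2 : ((2*(n+1)) + 2).factorial = (2*(n+1)).factorial * ((2*(n+1))+1) * ((2*(n+1))+2) := by
      rw [Nat.factorial_succ, Nat.factorial_succ]; ring
    rw [h2]
    have h3 : 3 ^ (n+1) * 2 ^ (n+2) * (n+2).factorial
        = (3 ^ n * 2 ^ (n+1) * (n+1).factorial) * (6 * (n+2)) := by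
      rw [Nat.factorial_succ]; ring
    rw [h3]
    calc (3 ^ n * 2 ^ (n+1) * (n+1).factorial) * (6 * (n+2))
        ≤ (2*(n+1)).factorial * (6 * (n+2)) := Nat.mul_le_mul_right _ ih
      _ ≤ (2*(n+1)).factorial * (((2*(n+1))+1) * ((2*(n+1))+2)) := by
          apply Nat.mul_le_mul_left
          nlinarith
      _ = (2*(n+1)).factorial * ((2*(n+1))+1) * ((2*(n+1))+2) := by ring

/-- The key analytic inequality for γ ≤ 2/3. -/
private lemma keyB {γ : ℝ} (h0 : 0 ≤ γ) (h23 : γ ≤ 2/3) (x : ℝ) :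
    γ + (1-γ) * Real.cosh x ≤ Real.exp ((1-γ) * x^2 / 2) := by
  set a : ℝ := 1 - γ with ha
  have ha3 : 1/3 ≤ a := by simp [ha]; linarith
  have ha1 : a ≤ 1 := by simp [ha]; linarith
  have ha0 : 0 < a := by linarith
  have hsumL : Summable (fun k : ℕ => a * (x ^ (2*k) / (2*k).factorial)) :=
    (summable_cosh_series x).mul_left a
  have hsumR : Summable (fun k : ℕ => (a * x^2/2) ^ k / k.factorial) :=
    Real.summable_pow_div_factorial _
  have hL : γ + a * Real.cosh x
      = 1 + ∑' k : ℕ, a * (x ^ (2*(k+1)) / (2*(k+1)).factorial) := by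
    rw [cosh_tsum, ← tsum_mul_left, Summable.tsum_eq_zero_add hsumL]
    simp [ha]
    ring
  have hR : Real.exp (a * x^2 / 2)
      = 1 + ∑' k : ℕ, (a * x^2/2) ^ (k+1) / (k+1).factorial := by
    rw [exp_tsum, Summable.tsum_eq_zero_add hsumR]
    simp
  have hterm : ∀ k : ℕ, a * (x ^ (2*(k+1)) / (2*(k+1)).factorial)
      ≤ (a * x^2/2) ^ (k+1) / (k+1).factorial := by
    intro k
    have hxe : (a * x^2/2) ^ (k+1) = a ^ (k+1) * x ^ (2*(k+1)) / 2 ^ (k+1) := by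
      rw [div_pow, mul_pow, ← pow_mul, mul_comm 2 (k+1)]
    rw [hxe, div_div, mul_div_assoc]
    have hx0 : (0:ℝ) ≤ x ^ (2*(k+1)) := by rw [pow_mul]; positivity
    -- reduce to comparing coefficients
    have hcoef : a / ((2*(k+1)).factorial : ℝ) ≤ a ^ (k+1) / (2 ^ (k+1) * (k+1).factorial) := by
      rw [div_le_div_iff₀ (by positivity) (by positivity)]
      have hpow : a ^ (k+1) = a * a ^ k := by ring
      have h3k : (1/3 : ℝ) ^ k ≤ a ^ k := pow_le_pow_left₀ (by norm_num) ha3 k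
      have hnat : (3:ℝ) ^ k * 2 ^ (k+1) * (k+1).factorial ≤ ((2*(k+1)).factorial : ℝ) := by
        exact_mod_cast nat_fact_bound k
      have h3pos : (0:ℝ) < 3 ^ k := by positivity
      rw [hpow]
      have key : (2:ℝ) ^ (k+1) * (k+1).factorial ≤ a ^ k * ((2*(k+1)).factorial : ℝ) := by
        have : (1/3:ℝ) ^ k * ((2*(k+1)).factorial : ℝ) ≥ (1/3:ℝ)^k * ((3:ℝ) ^ k * 2 ^ (k+1) * (k+1).factorial) := by
          apply mul_le_mul_of_nonneg_left hnat (by positivity)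
        have h13 : (1/3:ℝ)^k * (3:ℝ)^k = 1 := by
          rw [← mul_pow]; norm_num
        have hfle : (1/3:ℝ) ^ k * ((2*(k+1)).factorial : ℝ) ≥ 2 ^ (k+1) * (k+1).factorial := by
          calc (1/3:ℝ) ^ k * ((2*(k+1)).factorial : ℝ)
              ≥ (1/3:ℝ)^k * ((3:ℝ) ^ k * 2 ^ (k+1) * (k+1).factorial) := this
            _ = ((1/3:ℝ)^k * (3:ℝ)^k) * (2 ^ (k+1) * (k+1).factorial) := by ring
            _ = 2 ^ (k+1) * (k+1).factorial := by rw [h13]; ring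
        calc (2:ℝ) ^ (k+1) * (k+1).factorial ≤ (1/3:ℝ) ^ k * ((2*(k+1)).factorial : ℝ) := hfle
          _ ≤ a ^ k * ((2*(k+1)).factorial : ℝ) := by
              apply mul_le_mul_of_nonneg_right h3k (by positivity)
      calc a * ((2:ℝ) ^ (k+1) * (k+1).factorial) ≤ a * (a ^ k * ((2*(k+1)).factorial : ℝ)) := by
            apply mul_le_mul_of_nonneg_left key ha0.le
        _ = a * a ^ k * ((2*(k+1)).factorial : ℝ) := by ring
    calc a * (x ^ (2*(k+1)) / ((2*(k+1)).factorial : ℝ))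
        = (a / ((2*(k+1)).factorial : ℝ)) * x ^ (2*(k+1)) := by ring
      _ ≤ (a ^ (k+1) / (2 ^ (k+1) * (k+1).factorial)) * x ^ (2*(k+1)) := by
          apply mul_le_mul_of_nonneg_right hcoef hx0
      _ = a ^ (k+1) * (x ^ (2*(k+1)) / (2 ^ (k+1) * (k+1).factorial)) := by ring
  rw [hL, hR]
  gcongr 1 + ?_
  have hsumR' : Summable (fun k : ℕ => (a * x^2/2) ^ (k+1) / (k+1).factorial) :=
    (summable_nat_add_iff (f := fun k : ℕ => (a * x^2/2) ^ k / k.factorial) 1).mpr hsumR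
  have hsumL' : Summable (fun k : ℕ => a * (x ^ (2*(k+1)) / (2*(k+1)).factorial)) :=
    Summable.of_nonneg_of_le (fun k => by
      have : (0:ℝ) ≤ x ^ (2*(k+1)) := by rw [pow_mul]; positivity
      have h2 : (0:ℝ) < ((2*(k+1)).factorial : ℝ) := by positivity
      positivity) hterm hsumR'
  exact Summable.tsum_le_tsum hterm hsumL' hsumR'

/-- Compute the mgf integral. -/
private lemma integralA {Ω : Type*} [MeasurableSpace Ω] (μ : Measure Ω)
    [IsProbabilityMeasure μ] (ν : Ω → ℝ) (hmeas : Measurable ν) (γ : ℝ)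
    (hγ : γ ∈ Set.Icc (0 : ℝ) 1)
    (h1 : μ {ω | ν ω = 1} = ENNReal.ofReal ((1 - γ) / 2))
    (h2 : μ {ω | ν ω = -1} = ENNReal.ofReal ((1 - γ) / 2))
    (h0 : μ {ω | ν ω = 0} = ENNReal.ofReal γ) (l : ℝ) :
    ∫ ω, Real.exp (l * ν ω) ∂μ = γ + (1-γ) * Real.cosh l := by
  obtain ⟨hγ0, hγ1⟩ := hγ
  set A1 : Set Ω := {ω | ν ω = 1} with hA1
  set A2 : Set Ω := {ω | ν ω = -1} with hA2
  set A0 : Set Ω := {ω | ν ω = 0} with hA0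
  have m1 : MeasurableSet A1 := hmeas (measurableSet_singleton 1)
  have m2 : MeasurableSet A2 := hmeas (measurableSet_singleton (-1))
  have m0 : MeasurableSet A0 := hmeas (measurableSet_singleton 0)
  have d12 : Disjoint A1 A2 := by
    rw [Set.disjoint_left]; intro ω hω1 hω2
    simp only [hA1, hA2, Set.mem_setOf_eq] at hω1 hω2
    rw [hω1] at hω2; norm_num at hω2
  have d10 : Disjoint (A1 ∪ A2) A0 := by
    rw [Set.disjoint_left]; intro ω hω1 hω2
    simp only [hA1, hA2, hA0, Set.mem_setOf_eq, Set.mem_union] at hω1 hω2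
    rcases hω1 with h | h <;> rw [h] at hω2 <;> norm_num at hω2
  have hS : μ (A1 ∪ A2 ∪ A0) = 1 := by
    rw [measure_union d10 m0, measure_union d12 m2, h1, h2, h0]
    rw [← ENNReal.ofReal_add (by linarith) (by linarith),
        ← ENNReal.ofReal_add (by linarith) (by linarith)]
    norm_num
  have hSc : μ (A1 ∪ A2 ∪ A0)ᶜ = 0 := by
    rw [measure_compl ((m1.union m2).union m0) (measure_ne_top μ _), hS,
        measure_univ, tsub_self]
  have hae : ∀ᵐ ω ∂μ, ω ∈ A1 ∪ A2 ∪ A0 := by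
    rw [MeasureTheory.ae_iff]
    have hc : {ω | ¬ ω ∈ A1 ∪ A2 ∪ A0} = (A1 ∪ A2 ∪ A0)ᶜ := rfl
    rw [hc]; exact hSc
  have heq : (fun ω => Real.exp (l * ν ω)) =ᵐ[μ]
      (fun ω => A1.indicator (fun _ => Real.exp l) ω + A2.indicator (fun _ => Real.exp (-l)) ω
        + A0.indicator (fun _ => (1:ℝ)) ω) := by
    filter_upwards [hae] with ω hω
    rcases hω with (h | h) | h
    · have hv : ν ω = 1 := h
      have h2' : ω ∉ A2 := by
        intro hc; simp only [hA2, Set.mem_setOf_eq] at hc; rw [hv] at hc; norm_num at hc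
      have h0' : ω ∉ A0 := by
        intro hc; simp only [hA0, Set.mem_setOf_eq] at hc; rw [hv] at hc; norm_num at hc
      rw [Set.indicator_of_mem h, Set.indicator_of_notMem h2', Set.indicator_of_notMem h0', hv]
      simp
    · have hv : ν ω = -1 := h
      have h1' : ω ∉ A1 := by
        intro hc; simp only [hA1, Set.mem_setOf_eq] at hc; rw [hv] at hc; norm_num at hc
      have h0' : ω ∉ A0 := by
        intro hc; simp only [hA0, Set.mem_setOf_eq] at hc; rw [hv] at hc; norm_num at hc
      rw [Set.indicator_of_notMem h1', Set.indicator_of_mem h, Set.indicator_of_notMem h0', hv]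
      simp
    · have hv : ν ω = 0 := h
      have h1' : ω ∉ A1 := by
        intro hc; simp only [hA1, Set.mem_setOf_eq] at hc; rw [hv] at hc; norm_num at hc
      have h2' : ω ∉ A2 := by
        intro hc; simp only [hA2, Set.mem_setOf_eq] at hc; rw [hv] at hc; norm_num at hc
      rw [Set.indicator_of_notMem h1', Set.indicator_of_notMem h2', Set.indicator_of_mem h, hv]
      simp
  rw [integral_congr_ae heq]
  have i1 : Integrable (fun ω => A1.indicator (fun _ => Real.exp l) ω) μ :=
    (integrable_const _).indicator m1
  have i2 : Integrable (fun ω => A2.indicator (fun _ => Real.exp (-l)) ω) μ :=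
    (integrable_const _).indicator m2
  have i0 : Integrable (fun ω => A0.indicator (fun _ => (1:ℝ)) ω) μ :=
    (integrable_const _).indicator m0
  have i12 : Integrable (fun ω => A1.indicator (fun _ => Real.exp l) ω
      + A2.indicator (fun _ => Real.exp (-l)) ω) μ := i1.add i2
  rw [integral_add i12 i0, integral_add i1 i2,
      integral_indicator_const _ m1, integral_indicator_const _ m2,
      integral_indicator_const _ m0, measureReal_def, measureReal_def, measureReal_def, h1, h2, h0,
      ENNReal.toReal_ofReal (by linarith), ENNReal.toReal_ofReal (by linarith)]
  rw [Real.cosh_eq]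
  simp only [smul_eq_mul]
  ring

set_option maxHeartbeats 1000000 in
theorem three_point_strictly_subgaussian_iff {Ω : Type*} [MeasurableSpace Ω] (μ : Measure Ω)
    [IsProbabilityMeasure μ] (ν : Ω → ℝ) (hmeas : Measurable ν) (γ : ℝ)
    (hγ : γ ∈ Set.Icc (0 : ℝ) 1)
    (h1 : μ {ω | ν ω = 1} = ENNReal.ofReal ((1 - γ) / 2))
    (h2 : μ {ω | ν ω = -1} = ENNReal.ofReal ((1 - γ) / 2))
    (h0 : μ {ω | ν ω = 0} = ENNReal.ofReal γ) :
    (∀ l : ℝ, ∫ ω, Real.exp (l * ν ω) ∂μ ≤ Real.exp (l ^ 2 * (1 - γ) / 2)) ↔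
      (γ ≤ 2 / 3 ∨ γ = 1) := by
  have hInt := integralA μ ν hmeas γ hγ h1 h2 h0
  obtain ⟨hγ0, hγ1⟩ := hγ
  constructor
  · intro H
    by_contra hcon
    push_neg at hcon
    obtain ⟨h23, hne1⟩ := hcon
    set a : ℝ := 1 - γ with ha
    have ha0 : 0 < a := by
      have : γ < 1 := lt_of_le_of_ne hγ1 hne1
      simp [ha]; linarith
    have ha3 : a < 1/3 := by simp [ha]; linarith
    -- choose t
    set t : ℝ := min ((1 - 3*a)/a^2) (2/a) with htdef
    have ht0 : 0 < t := by
      apply lt_min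
      · apply div_pos (by linarith) (by positivity)
      · positivity
    have htb : t ≤ (1 - 3*a)/a^2 := min_le_left _ _
    have ht2 : a * t / 2 ≤ 1 := by
      have : t ≤ 2/a := min_le_right _ _
      rw [div_le_one (by norm_num : (0:ℝ) < 2)]
      calc a * t ≤ a * (2/a) := by apply mul_le_mul_of_nonneg_left this ha0.le
        _ = 2 := by field_simp
    set l : ℝ := Real.sqrt t with hl
    have hl2 : l ^ 2 = t := Real.sq_sqrt ht0.le
    -- cosh lower bound
    have hcosh : 1 + t/2 + t^2/24 ≤ Real.cosh l := by
      rw [cosh_tsum]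
      have := Summable.sum_le_tsum (Finset.range 3) (fun i _ => by positivity)
        (summable_cosh_series l)
      calc 1 + t/2 + t^2/24
          = ∑ k ∈ Finset.range 3, l ^ (2*k) / ((2*k).factorial : ℝ) := by
            rw [Finset.sum_range_succ, Finset.sum_range_succ, Finset.sum_range_succ,
              Finset.sum_range_zero, pow_mul, pow_mul, pow_mul, hl2]
            norm_num [Nat.factorial]
        _ ≤ _ := this
    -- exp upper bound
    set x : ℝ := a * t / 2 with hx
    have hx0 : 0 ≤ x := by positivity
    have hxb : |x| ≤ 1 := by rw [abs_of_nonneg hx0]; exact ht2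
    clear_value x l t a
    have hexp := Real.exp_bound hxb (by norm_num : 0 < 3)
    have hsum3 : ∑ m ∈ Finset.range 3, x ^ m / (m.factorial : ℝ) = 1 + x + x^2/2 := by
      rw [Finset.sum_range_succ, Finset.sum_range_succ, Finset.sum_range_succ,
        Finset.sum_range_zero]
      norm_num [Nat.factorial]
    rw [hsum3, abs_of_nonneg hx0] at hexp
    have hexp' : Real.exp x ≤ 1 + x + x^2/2 + x^3 * (2/9) := by
      have h2' := (abs_le.mp hexp).2
      norm_num [Nat.factorial] at h2'
      nlinarith [h2']
    -- the hypothesis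
    have hH := H l
    rw [hInt l] at hH
    have hc : l ^ 2 * a / 2 = x := by rw [hl2, hx]; ring
    rw [hc] at hH
    have hchain : 1 + a*t/2 + a*t^2/24 ≤ Real.exp x := by
      calc 1 + a*t/2 + a*t^2/24 = γ + a * (1 + t/2 + t^2/24) := by rw [ha]; ring
        _ ≤ γ + a * Real.cosh l := by nlinarith [hcosh]
        _ ≤ Real.exp x := hH
    have hfinal : 1 + a*t/2 + a*t^2/24 ≤ 1 + x + x^2/2 + x^3 * (2/9) :=
      le_trans hchain hexp'
    rw [hx] at hfinal
    -- now derive contradiction: a*t²/24 > a²t²/8 + a³t³/36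
    have hta : a^2 * t ≤ 1 - 3*a := by
      rw [le_div_iff₀ (by positivity)] at htb
      linarith [htb]
    have hpos : 0 < a * t^2 := mul_pos ha0 (pow_pos ht0 2)
    have expand : a*t^2/24 ≤ a^2*t^2/8 + a^3*t^3/36 := by nlinarith [hfinal]
    have key1 : a^3*t^3 ≤ (1-3*a) * (a*t^2) := by
      nlinarith [mul_le_mul_of_nonneg_right hta (mul_pos ha0 (mul_pos ht0 ht0)).le]
    have hstep : a*t^2/24 ≤ a * (a*t^2)/8 + (1-3*a)*(a*t^2)/36 := by nlinarith [expand, key1]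
    have hau : a * (a*t^2) < (1/3) * (a*t^2) := mul_lt_mul_of_pos_right ha3 hpos
    linarith [hstep, hau, hpos]
  · intro h l
    rw [hInt l]
    rcases h with h | h
    · have := keyB hγ0 h l
      calc γ + (1-γ) * Real.cosh l ≤ Real.exp ((1-γ) * l^2 / 2) := this
        _ = Real.exp (l^2 * (1-γ)/2) := by ring_nf
    · subst h
      simp
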